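/- The set of proper filters of an inverse semigroup S forms a groupoid under the partial operation A·B = (AB)↑ defined when d(A) = r(B); the identities of this groupoid are exactly the proper filters containing an idempotent. -/
import Mathlib


/-- An inverse semigroup with zero: associative multiplication, unique
generalized inverses, and a multiplicatively absorbing zero. -/
structure InvSemigroupZero (S : Type*) [Mul S] [Inv S] [Zero S] : Prop where
  mul_assoc : ∀ a b c : S, a * b * c = a * (b * c)
  mul_inv_mul : ∀ a : S, a * a⁻¹ * a = a
  inv_mul_inv : ∀ a : S, a⁻¹ * a * a⁻¹ = a⁻¹
  inv_unique : ∀ a t : S, a * t * a = a → t * a * t = t → t = a⁻¹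
  zero_mul : ∀ a : S, 0 * a = 0
  mul_zero : ∀ a : S, a * 0 = 0

def IsIdem {S : Type*} [Mul S] (e : S) : Prop := e * e = e

/-- The natural partial order: `s ≤ t` iff `s = t e` for some idempotent `e`. -/
def natLe {S : Type*} [Mul S] (s t : S) : Prop := ∃ e : S, IsIdem e ∧ s = t * e

/-- `s` and `t` are compatible iff `s⁻¹ t` and `s t⁻¹` are idempotents. -/
def Compat {S : Type*} [Mul S] [Inv S] (s t : S) : Prop :=
  IsIdem (s⁻¹ * t) ∧ IsIdem (s * t⁻¹)

/-- Upward closure of a subset in the natural partial order. -/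
def upc {S : Type*} [Mul S] (X : Set S) : Set S := {s | ∃ x ∈ X, natLe x s}

/-- A filter: nonempty, upward closed and downward directed. -/
def IsFilt {S : Type*} [Mul S] (A : Set S) : Prop :=
  A.Nonempty ∧ (∀ a ∈ A, ∀ s, natLe a s → s ∈ A) ∧
    ∀ a ∈ A, ∀ b ∈ A, ∃ c ∈ A, natLe c a ∧ natLe c b

/-- A proper filter: a filter not containing `0`. -/
def IsPFilt {S : Type*} [Mul S] [Zero S] (A : Set S) : Prop := IsFilt A ∧ (0 : S) ∉ A

def dF {S : Type*} [Mul S] [Inv S] (A : Set S) : Set S :=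
  upc {p | ∃ a ∈ A, ∃ b ∈ A, p = a⁻¹ * b}

def rF {S : Type*} [Mul S] [Inv S] (A : Set S) : Set S :=
  upc {p | ∃ a ∈ A, ∃ b ∈ A, p = a * b⁻¹}

def invF {S : Type*} [Inv S] (A : Set S) : Set S := Inv.inv '' A

def mulF {S : Type*} [Mul S] (A B : Set S) : Set S :=
  upc {p | ∃ a ∈ A, ∃ b ∈ B, p = a * b}

/-- An ultrafilter: a maximal proper filter. -/
def IsUltraF {S : Type*} [Mul S] [Zero S] (A : Set S) : Prop :=
  IsPFilt A ∧ ∀ B : Set S, IsPFilt B → A ⊆ B → A = B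

namespace ISZ

variable {S : Type*} [Mul S] [Inv S] [Zero S] (hS : InvSemigroupZero S)

set_option linter.unusedSectionVars false

include hS

lemma inv_inv' (a : S) : a⁻¹⁻¹ = a :=
  (hS.inv_unique a⁻¹ a (hS.inv_mul_inv a) (hS.mul_inv_mul a)).symm

lemma idem_inv {e : S} (he : IsIdem e) : e⁻¹ = e := by
  have he' : e * e = e := he
  exact (hS.inv_unique e e (by rw [he', he']) (by rw [he', he'])).symm

lemma idem_ia (a : S) : IsIdem (a⁻¹ * a) := by
  show a⁻¹ * a * (a⁻¹ * a) = a⁻¹ * a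
  rw [← hS.mul_assoc, hS.inv_mul_inv a]

lemma idem_ai (a : S) : IsIdem (a * a⁻¹) := by
  show a * a⁻¹ * (a * a⁻¹) = a * a⁻¹
  rw [← hS.mul_assoc, hS.mul_inv_mul a]

lemma idem_mul_idem {e f : S} (he : IsIdem e) (hf : IsIdem f) : IsIdem (e * f) := by
  have A := hS.mul_assoc
  have he' : e * e = e := he
  have hf' : f * f = f := hf
  have heE : ∀ w : S, e * (e * w) = e * w := fun w => by rw [← A, he']
  have hfE : ∀ w : S, f * (f * w) = f * w := fun w => by rw [← A, hf']
  have m1 : e * (f * ((e*f)⁻¹ * (e*f))) = e * f := by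
    have h2 := hS.mul_inv_mul (e*f); simp only [A] at h2; exact h2
  have m2 : (e*f)⁻¹ * (e * (f * (e*f)⁻¹)) = (e*f)⁻¹ := by
    have h2 := hS.inv_mul_inv (e*f); simp only [A] at h2; exact h2
  have m2E : ∀ w : S, (e*f)⁻¹ * (e * (f * ((e*f)⁻¹ * w))) = (e*f)⁻¹ * w := fun w => by
    have h2 : ((e*f)⁻¹ * (e*f) * (e*f)⁻¹) * w = (e*f)⁻¹ * w := by rw [hS.inv_mul_inv]
    simp only [A] at h2; exact h2
  have h1 : f * (e*f)⁻¹ * e = (e*f)⁻¹ := by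
    refine hS.inv_unique (e*f) (f * (e*f)⁻¹ * e) ?_ ?_
    · simp only [A, hfE, heE]
      simp only [m1]
    · simp only [A, hfE, heE, m2E]
  have hbidem : IsIdem ((e*f)⁻¹) := by
    show (e*f)⁻¹ * (e*f)⁻¹ = (e*f)⁻¹
    rw [← h1]
    simp only [A, m2E]
  have h3 : e * f = (e*f)⁻¹ :=
    calc e * f = ((e*f)⁻¹)⁻¹ := (inv_inv' hS _).symm
      _ = (e*f)⁻¹ := idem_inv hS hbidem
  show (e*f) * (e*f) = e*f
  rw [h3]; exact hbidem

lemma idem_comm {e f : S} (he : IsIdem e) (hf : IsIdem f) : e * f = f * e := by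
  have A := hS.mul_assoc
  have he' : e * e = e := he
  have hf' : f * f = f := hf
  have heE : ∀ w : S, e * (e * w) = e * w := fun w => by rw [← A, he']
  have hfE : ∀ w : S, f * (f * w) = f * w := fun w => by rw [← A, hf']
  have hef : IsIdem (e * f) := idem_mul_idem hS he hf
  have hfe : IsIdem (f * e) := idem_mul_idem hS hf he
  have hef' : e * (f * (e * f)) = e * f := by
    have h2 : (e*f) * (e*f) = e*f := hef; simp only [A] at h2; exact h2
  have hfe' : f * (e * (f * e)) = f * e := by
    have h2 : (f*e) * (f*e) = f*e := hfe; simp only [A] at h2; exact h2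
  have h : f * e = (e * f)⁻¹ := by
    refine hS.inv_unique (e*f) (f*e) ?_ ?_
    · simp only [A, hfE, heE]
      simp only [hef']
    · simp only [A, hfE, heE]
      simp only [hfe']
  rw [h]
  exact (idem_inv hS hef).symm

lemma mul_inv_rev' (a b : S) : (a * b)⁻¹ = b⁻¹ * a⁻¹ := by
  have A := hS.mul_assoc
  refine (hS.inv_unique (a * b) (b⁻¹ * a⁻¹) ?_ ?_).symm
  · calc a * b * (b⁻¹ * a⁻¹) * (a * b) = a * (b * b⁻¹ * (a⁻¹ * a)) * b := by simp only [A]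
      _ = a * (a⁻¹ * a * (b * b⁻¹)) * b := by
        rw [idem_comm hS (idem_ai hS b) (idem_ia hS a)]
      _ = (a * a⁻¹ * a) * (b * b⁻¹ * b) := by simp only [A]
      _ = a * b := by rw [hS.mul_inv_mul, hS.mul_inv_mul]
  · calc b⁻¹ * a⁻¹ * (a * b) * (b⁻¹ * a⁻¹) = b⁻¹ * (a⁻¹ * a * (b * b⁻¹)) * a⁻¹ := by simp only [A]
      _ = b⁻¹ * (b * b⁻¹ * (a⁻¹ * a)) * a⁻¹ := by
        rw [idem_comm hS (idem_ia hS a) (idem_ai hS b)]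
      _ = (b⁻¹ * b * b⁻¹) * (a⁻¹ * a * a⁻¹) := by simp only [A]
      _ = b⁻¹ * a⁻¹ := by rw [hS.inv_mul_inv, hS.inv_mul_inv]

lemma zero_inv : (0 : S)⁻¹ = 0 :=
  (hS.inv_unique 0 0 (by simp only [hS.mul_zero]) (by simp only [hS.mul_zero])).symm


lemma natLe_refl (s : S) : natLe s s :=
  ⟨s⁻¹ * s, idem_ia hS s, by rw [← hS.mul_assoc, hS.mul_inv_mul]⟩

lemma natLe_trans {s t u : S} (h1 : natLe s t) (h2 : natLe t u) : natLe s u := by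
  obtain ⟨e, he, rfl⟩ := h1
  obtain ⟨f, hf, rfl⟩ := h2
  exact ⟨f * e, idem_mul_idem hS hf he, hS.mul_assoc u f e⟩

lemma idem_conj (t : S) {f : S} (hf : IsIdem f) : IsIdem (t⁻¹ * f * t) := by
  have A := hS.mul_assoc
  have hf' : f * f = f := hf
  show (t⁻¹ * f * t) * (t⁻¹ * f * t) = t⁻¹ * f * t
  calc (t⁻¹ * f * t) * (t⁻¹ * f * t) = t⁻¹ * ((f * (t * t⁻¹)) * f) * t := by
        simp only [A]
    _ = t⁻¹ * (((t * t⁻¹) * f) * f) * t := by rw [idem_comm hS hf (idem_ai hS t)]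
    _ = (t⁻¹ * t * t⁻¹) * (f * (f * t)) := by simp only [A]
    _ = t⁻¹ * (f * (f * t)) := by rw [hS.inv_mul_inv]
    _ = t⁻¹ * ((f * f) * t) := by simp only [A]
    _ = t⁻¹ * f * t := by rw [hf']; simp only [A]

lemma natLe_of_left {s t f : S} (hf : IsIdem f) (h : s = f * t) : natLe s t := by
  refine ⟨t⁻¹ * f * t, idem_conj hS t hf, ?_⟩
  have A := hS.mul_assoc
  rw [h]
  symm
  calc t * (t⁻¹ * f * t) = (t * t⁻¹ * f) * t := by simp only [A]
    _ = (f * (t * t⁻¹)) * t := by rw [idem_comm hS (idem_ai hS t) hf]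
    _ = f * (t * t⁻¹ * t) := by simp only [A]
    _ = f * t := by rw [hS.mul_inv_mul]

lemma natLe_to_left {s t : S} (h : natLe s t) : s = (s * s⁻¹) * t := by
  obtain ⟨e, he, rfl⟩ := h
  have A := hS.mul_assoc
  have he' : e * e = e := he
  have hinv : (t * e)⁻¹ = e * t⁻¹ := by rw [mul_inv_rev' hS, idem_inv hS he]
  rw [hinv]
  symm
  calc t * e * (e * t⁻¹) * t = t * ((e * e) * (t⁻¹ * t)) := by simp only [A]
    _ = t * (e * (t⁻¹ * t)) := by rw [he']
    _ = t * ((t⁻¹ * t) * e) := by rw [idem_comm hS he (idem_ia hS t)]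
    _ = (t * t⁻¹ * t) * e := by simp only [A]
    _ = t * e := by rw [hS.mul_inv_mul]

lemma natLe_mul_right {s t : S} (u : S) (h : natLe s t) : natLe (s * u) (t * u) := by
  obtain ⟨e, he, rfl⟩ := h
  refine ⟨u⁻¹ * e * u, idem_conj hS u he, ?_⟩
  have A := hS.mul_assoc
  symm
  calc t * u * (u⁻¹ * e * u) = t * (((u * u⁻¹) * e) * u) := by simp only [A]
    _ = t * ((e * (u * u⁻¹)) * u) := by rw [idem_comm hS (idem_ai hS u) he]
    _ = t * e * (u * u⁻¹ * u) := by simp only [A]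
    _ = t * e * u := by rw [hS.mul_inv_mul]

lemma natLe_mul_left {u v : S} (s : S) (h : natLe u v) : natLe (s * u) (s * v) := by
  obtain ⟨e, he, rfl⟩ := h
  exact ⟨e, he, (hS.mul_assoc s v e).symm⟩

lemma natLe_mul {s t u v : S} (h1 : natLe s t) (h2 : natLe u v) :
    natLe (s * u) (t * v) :=
  natLe_trans hS (natLe_mul_right hS u h1) (natLe_mul_left hS t h2)

lemma natLe_inv {s t : S} (h : natLe s t) : natLe s⁻¹ t⁻¹ := by
  obtain ⟨e, he, rfl⟩ := h
  refine natLe_of_left hS he ?_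
  rw [mul_inv_rev' hS, idem_inv hS he]

lemma natLe_zero {s : S} (h : natLe s 0) : s = 0 := by
  obtain ⟨e, he, rfl⟩ := h
  exact hS.zero_mul e


omit hS in
lemma mem_mulF {X Y : Set S} {p : S} :
    p ∈ mulF X Y ↔ ∃ a ∈ X, ∃ b ∈ Y, natLe (a * b) p := by
  constructor
  · rintro ⟨q, ⟨a, ha, b, hb, rfl⟩, hle⟩
    exact ⟨a, ha, b, hb, hle⟩
  · rintro ⟨a, ha, b, hb, hle⟩
    exact ⟨a * b, ⟨a, ha, b, hb, rfl⟩, hle⟩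

lemma sub_upc (X : Set S) : X ⊆ upc X := fun x hx => ⟨x, hx, natLe_refl hS x⟩

lemma mulF_upc_left (X Y : Set S) : mulF (upc X) Y = mulF X Y := by
  ext p
  rw [mem_mulF, mem_mulF]
  constructor
  · rintro ⟨a', ⟨a, ha, hle⟩, b, hb, hle2⟩
    exact ⟨a, ha, b, hb, natLe_trans hS (natLe_mul_right hS b hle) hle2⟩
  · rintro ⟨a, ha, b, hb, hle⟩
    exact ⟨a, sub_upc hS X ha, b, hb, hle⟩

lemma mulF_upc_right (X Y : Set S) : mulF X (upc Y) = mulF X Y := by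
  ext p
  rw [mem_mulF, mem_mulF]
  constructor
  · rintro ⟨a, ha, b', ⟨b, hb, hle⟩, hle2⟩
    exact ⟨a, ha, b, hb, natLe_trans hS (natLe_mul_left hS a hle) hle2⟩
  · rintro ⟨a, ha, b, hb, hle⟩
    exact ⟨a, ha, b, sub_upc hS Y hb, hle⟩

lemma mulF_assoc (X Y Z : Set S) : mulF (mulF X Y) Z = mulF X (mulF Y Z) := by
  have h1 : mulF (mulF X Y) Z = mulF {p | ∃ a ∈ X, ∃ b ∈ Y, p = a * b} Z :=
    mulF_upc_left hS _ Z
  have h2 : mulF X (mulF Y Z) = mulF X {p | ∃ a ∈ Y, ∃ b ∈ Z, p = a * b} :=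
    mulF_upc_right hS X _
  rw [h1, h2]
  ext p
  rw [mem_mulF, mem_mulF]
  constructor
  · rintro ⟨q, ⟨a, ha, b, hb, rfl⟩, c, hc, hle⟩
    refine ⟨a, ha, b * c, ⟨b, hb, c, hc, rfl⟩, ?_⟩
    rwa [← hS.mul_assoc]
  · rintro ⟨a, ha, q, ⟨b, hb, c, hc, rfl⟩, hle⟩
    refine ⟨a * b, ⟨a, ha, b, hb, rfl⟩, c, hc, ?_⟩
    rwa [hS.mul_assoc]

lemma invF_invF (A : Set S) : invF (invF A) = A := by
  ext x
  constructor
  · rintro ⟨y, ⟨a, ha, rfl⟩, rfl⟩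
    rwa [inv_inv' hS]
  · intro hx
    exact ⟨x⁻¹, ⟨x, hx, rfl⟩, inv_inv' hS x⟩

lemma invF_upc (X : Set S) : invF (upc X) = upc (invF X) := by
  ext p
  constructor
  · rintro ⟨a, ⟨x, hx, hle⟩, rfl⟩
    exact ⟨x⁻¹, ⟨x, hx, rfl⟩, natLe_inv hS hle⟩
  · rintro ⟨y, ⟨x, hx, rfl⟩, hle⟩
    refine ⟨p⁻¹, ⟨x, hx, ?_⟩, inv_inv' hS p⟩
    have := natLe_inv hS hle
    rwa [inv_inv' hS] at this

lemma invF_mulF (X Y : Set S) : invF (mulF X Y) = mulF (invF Y) (invF X) := by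
  have hcore : invF {p | ∃ a ∈ X, ∃ b ∈ Y, p = a * b}
      = {p | ∃ u ∈ invF Y, ∃ v ∈ invF X, p = u * v} := by
    ext p
    constructor
    · rintro ⟨q, ⟨a, ha, b, hb, rfl⟩, rfl⟩
      exact ⟨b⁻¹, ⟨b, hb, rfl⟩, a⁻¹, ⟨a, ha, rfl⟩, mul_inv_rev' hS a b⟩
    · rintro ⟨u, ⟨b, hb, rfl⟩, v, ⟨a, ha, rfl⟩, rfl⟩
      exact ⟨a * b, ⟨a, ha, b, hb, rfl⟩, mul_inv_rev' hS a b⟩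
  show invF (upc _) = upc _
  rw [invF_upc hS, hcore]

lemma dF_eq (A : Set S) : dF A = mulF (invF A) A := by
  have : {p | ∃ a ∈ A, ∃ b ∈ A, p = a⁻¹ * b}
      = {p | ∃ x ∈ invF A, ∃ b ∈ A, p = x * b} := by
    ext p
    constructor
    · rintro ⟨a, ha, b, hb, rfl⟩
      exact ⟨a⁻¹, ⟨a, ha, rfl⟩, b, hb, rfl⟩
    · rintro ⟨x, ⟨a, ha, rfl⟩, b, hb, rfl⟩
      exact ⟨a, ha, b, hb, rfl⟩
  show upc _ = upc _
  rw [this]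

lemma rF_eq (A : Set S) : rF A = mulF A (invF A) := by
  have : {p | ∃ a ∈ A, ∃ b ∈ A, p = a * b⁻¹}
      = {p | ∃ a ∈ A, ∃ x ∈ invF A, p = a * x} := by
    ext p
    constructor
    · rintro ⟨a, ha, b, hb, rfl⟩
      exact ⟨a, ha, b⁻¹, ⟨b, hb, rfl⟩, rfl⟩
    · rintro ⟨a, ha, x, ⟨b, hb, rfl⟩, rfl⟩
      exact ⟨a, ha, b, hb, rfl⟩
  show upc _ = upc _
  rw [this]

lemma rF_invF (A : Set S) : rF (invF A) = dF A := by
  rw [rF_eq hS, invF_invF hS, ← dF_eq hS]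

lemma dF_invF (A : Set S) : dF (invF A) = rF A := by
  rw [dF_eq hS, invF_invF hS, ← rF_eq hS]

lemma low3 {A : Set S} (hA : IsFilt A) {a b c : S} (ha : a ∈ A) (hb : b ∈ A)
    (hc : c ∈ A) : ∃ d ∈ A, natLe d a ∧ natLe d b ∧ natLe d c := by
  obtain ⟨d1, hd1, hd1a, hd1b⟩ := hA.2.2 a ha b hb
  obtain ⟨d, hd, hdd1, hdc⟩ := hA.2.2 d1 hd1 c hc
  exact ⟨d, hd, natLe_trans hS hdd1 hd1a, natLe_trans hS hdd1 hd1b, hdc⟩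

lemma filt_mul {A B : Set S} (hA : IsFilt A) (hB : IsFilt B) : IsFilt (mulF A B) := by
  obtain ⟨⟨a0, ha0⟩, hupA, hdirA⟩ := hA
  obtain ⟨⟨b0, hb0⟩, hupB, hdirB⟩ := hB
  refine ⟨⟨a0 * b0, mem_mulF.2 ⟨a0, ha0, b0, hb0, natLe_refl hS _⟩⟩, ?_, ?_⟩
  · rintro p ⟨q, hq, hle⟩ s hps
    exact ⟨q, hq, natLe_trans hS hle hps⟩
  · intro p hp q hq
    obtain ⟨a1, ha1, b1, hb1, hle1⟩ := mem_mulF.1 hp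
    obtain ⟨a2, ha2, b2, hb2, hle2⟩ := mem_mulF.1 hq
    obtain ⟨a, ha, haa1, haa2⟩ := hdirA a1 ha1 a2 ha2
    obtain ⟨b, hb, hbb1, hbb2⟩ := hdirB b1 hb1 b2 hb2
    refine ⟨a * b, mem_mulF.2 ⟨a, ha, b, hb, natLe_refl hS _⟩, ?_, ?_⟩
    · exact natLe_trans hS (natLe_mul hS haa1 hbb1) hle1
    · exact natLe_trans hS (natLe_mul hS haa2 hbb2) hle2

lemma filt_mul_dF {A : Set S} (hA : IsFilt A) : mulF A (dF A) = A := by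
  have h1 : mulF A (dF A) = mulF A {p | ∃ a ∈ A, ∃ b ∈ A, p = a⁻¹ * b} :=
    mulF_upc_right hS A _
  rw [h1]
  ext p
  constructor
  · intro hp
    obtain ⟨x, hx, q, ⟨b, hb, c, hc, rfl⟩, hle⟩ := mem_mulF.1 hp
    obtain ⟨d, hd, hdx, hdb, hdc⟩ := low3 hS hA hx hb hc
    have h2 : natLe (d * (d⁻¹ * d)) (x * (b⁻¹ * c)) :=
      natLe_mul hS hdx (natLe_mul hS (natLe_inv hS hdb) hdc)
    have h3 : d * (d⁻¹ * d) = d := by rw [← hS.mul_assoc, hS.mul_inv_mul]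
    rw [h3] at h2
    exact hA.2.1 d hd p (natLe_trans hS h2 hle)
  · intro hp
    refine mem_mulF.2 ⟨p, hp, p⁻¹ * p, ⟨p, hp, p, hp, rfl⟩, ?_⟩
    have h3 : p * (p⁻¹ * p) = p := by rw [← hS.mul_assoc, hS.mul_inv_mul]
    rw [h3]
    exact natLe_refl hS p

lemma filt_rF_mul {A : Set S} (hA : IsFilt A) : mulF (rF A) A = A := by
  have h1 : mulF (rF A) A = mulF {p | ∃ a ∈ A, ∃ b ∈ A, p = a * b⁻¹} A :=
    mulF_upc_left hS _ A
  rw [h1]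
  ext p
  constructor
  · intro hp
    obtain ⟨q, ⟨b, hb, c, hc, rfl⟩, x, hx, hle⟩ := mem_mulF.1 hp
    obtain ⟨d, hd, hdb, hdc, hdx⟩ := low3 hS hA hb hc hx
    have h2 : natLe ((d * d⁻¹) * d) ((b * c⁻¹) * x) :=
      natLe_mul hS (natLe_mul hS hdb (natLe_inv hS hdc)) hdx
    rw [hS.mul_inv_mul] at h2
    exact hA.2.1 d hd p (natLe_trans hS h2 hle)
  · intro hp
    refine mem_mulF.2 ⟨p * p⁻¹, ⟨p, hp, p, hp, rfl⟩, p, hp, ?_⟩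
    rw [hS.mul_inv_mul]
    exact natLe_refl hS p

lemma pfilt_mul {A B : Set S} (hA : IsPFilt A) (hB : IsPFilt B)
    (h : dF A = rF B) : IsPFilt (mulF A B) := by
  refine ⟨filt_mul hS hA.1 hB.1, ?_⟩
  intro h0
  obtain ⟨a, haA, b, hbB, hle⟩ := mem_mulF.1 h0
  have hab0 : a * b = 0 := natLe_zero hS hle
  have hda : a⁻¹ * a ∈ rF B := by
    rw [← h]
    exact ⟨a⁻¹ * a, ⟨a, haA, a, haA, rfl⟩, natLe_refl hS _⟩
  obtain ⟨q, ⟨b1, hb1, b2, hb2, rfl⟩, hq⟩ := hda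
  obtain ⟨w, hwB, hw1, hw2, hwb⟩ := low3 hS hB.1 hb1 hb2 hbB
  have h1 : natLe (w * w⁻¹) (a⁻¹ * a) :=
    natLe_trans hS (natLe_mul hS hw1 (natLe_inv hS hw2)) hq
  obtain ⟨g, hg, hEq⟩ := h1
  have haw : a * w = 0 := by
    have h2 : natLe (a * w) (a * b) := natLe_mul_left hS a hwb
    rw [hab0] at h2
    exact natLe_zero hS h2
  have hwEq : w = a⁻¹ * (a * (g * w)) := by
    have A' := hS.mul_assoc
    calc w = w * w⁻¹ * w := (hS.mul_inv_mul w).symm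
      _ = (a⁻¹ * a * g) * w := by rw [hEq]
      _ = a⁻¹ * (a * (g * w)) := by simp only [A']
  have h2 : a * (g * w) = 0 := by
    have A' := hS.mul_assoc
    calc a * (g * w) = (a * a⁻¹ * a) * (g * w) := by rw [hS.mul_inv_mul]
      _ = a * (a⁻¹ * (a * (g * w))) := by simp only [A']
      _ = a * w := by rw [← hwEq]
      _ = 0 := haw
  have hw0 : w = 0 := by rw [hwEq, h2, hS.mul_zero]
  rw [hw0] at hwB
  exact hB.2 hwB

lemma pfilt_inv {A : Set S} (hA : IsPFilt A) : IsPFilt (invF A) := by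
  obtain ⟨⟨⟨a0, ha0⟩, hup, hdir⟩, h0⟩ := hA
  refine ⟨⟨⟨a0⁻¹, a0, ha0, rfl⟩, ?_, ?_⟩, ?_⟩
  · rintro x ⟨a, ha, rfl⟩ s hs
    have h1 : natLe a s⁻¹ := by
      have := natLe_inv hS hs
      rwa [inv_inv' hS] at this
    exact ⟨s⁻¹, hup a ha s⁻¹ h1, inv_inv' hS s⟩
  · rintro x ⟨a, ha, rfl⟩ y ⟨b, hb, rfl⟩
    obtain ⟨c, hc, hca, hcb⟩ := hdir a ha b hb
    exact ⟨c⁻¹, ⟨c, hc, rfl⟩, natLe_inv hS hca, natLe_inv hS hcb⟩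
  · rintro ⟨a, ha, hEq⟩
    have : a = 0 := by rw [← inv_inv' hS a, hEq, zero_inv hS]
    rw [this] at ha
    exact h0 ha


lemma pair_idem_below {E : Set S} (hE : IsFilt E) {e : S} (heE : e ∈ E)
    (he : IsIdem e) {a b : S} (ha : a ∈ E) (hb : b ∈ E) :
    ∃ c ∈ E, IsIdem c ∧ natLe c a ∧ natLe c b := by
  obtain ⟨d, hd, hda, hdb⟩ := hE.2.2 a ha b hb
  obtain ⟨c, hc, hcd, hce⟩ := hE.2.2 d hd e heE
  have hcI : IsIdem c := by
    obtain ⟨f, hf, rfl⟩ := hce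
    exact idem_mul_idem hS he hf
  exact ⟨c, hc, hcI, natLe_trans hS hcd hda, natLe_trans hS hcd hdb⟩

lemma idem_filter_eqs {E : Set S} (hE : IsFilt E) {e : S} (heE : e ∈ E)
    (he : IsIdem e) : dF E = E ∧ rF E = E ∧ mulF E E = E := by
  refine ⟨?_, ?_, ?_⟩
  · ext p
    constructor
    · rintro ⟨q, ⟨a, ha, b, hb, rfl⟩, hq⟩
      obtain ⟨c, hc, hcI, hca, hcb⟩ := pair_idem_below hS hE heE he ha hb
      have h1 : natLe (c⁻¹ * c) (a⁻¹ * b) := natLe_mul hS (natLe_inv hS hca) hcb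
      have h2 : c⁻¹ * c = c := by rw [idem_inv hS hcI]; exact hcI
      rw [h2] at h1
      exact hE.2.1 c hc p (natLe_trans hS h1 hq)
    · intro hp
      obtain ⟨c, hc, hcI, hcp, -⟩ := pair_idem_below hS hE heE he hp hp
      refine ⟨c⁻¹ * c, ⟨c, hc, c, hc, rfl⟩, ?_⟩
      have h2 : c⁻¹ * c = c := by rw [idem_inv hS hcI]; exact hcI
      rw [h2]
      exact hcp
  · ext p
    constructor
    · rintro ⟨q, ⟨a, ha, b, hb, rfl⟩, hq⟩
      obtain ⟨c, hc, hcI, hca, hcb⟩ := pair_idem_below hS hE heE he ha hb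
      have h1 : natLe (c * c⁻¹) (a * b⁻¹) := natLe_mul hS hca (natLe_inv hS hcb)
      have h2 : c * c⁻¹ = c := by rw [idem_inv hS hcI]; exact hcI
      rw [h2] at h1
      exact hE.2.1 c hc p (natLe_trans hS h1 hq)
    · intro hp
      obtain ⟨c, hc, hcI, hcp, -⟩ := pair_idem_below hS hE heE he hp hp
      refine ⟨c * c⁻¹, ⟨c, hc, c, hc, rfl⟩, ?_⟩
      have h2 : c * c⁻¹ = c := by rw [idem_inv hS hcI]; exact hcI
      rw [h2]
      exact hcp
  · ext p
    constructor
    · intro hp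
      obtain ⟨a, ha, b, hb, hle⟩ := mem_mulF.1 hp
      obtain ⟨c, hc, hcI, hca, hcb⟩ := pair_idem_below hS hE heE he ha hb
      have h1 : natLe (c * c) (a * b) := natLe_mul hS hca hcb
      have h2 : c * c = c := hcI
      rw [h2] at h1
      exact hE.2.1 c hc p (natLe_trans hS h1 hle)
    · intro hp
      obtain ⟨c, hc, hcI, hcp, -⟩ := pair_idem_below hS hE heE he hp hp
      refine mem_mulF.2 ⟨c, hc, c, hc, ?_⟩
      have h2 : c * c = c := hcI
      rw [h2]
      exact hcp

end ISZ

theorem proper_filters_form_groupoid {S : Type*} [Mul S] [Inv S] [Zero S]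
    (hS : InvSemigroupZero S) :
    (∀ A B : Set S, IsPFilt A → IsPFilt B → dF A = rF B → IsPFilt (mulF A B)) ∧
    (∀ A B : Set S, IsPFilt A → IsPFilt B → dF A = rF B →
      dF (mulF A B) = dF B ∧ rF (mulF A B) = rF A) ∧
    (∀ A B C : Set S, IsPFilt A → IsPFilt B → IsPFilt C →
      dF A = rF B → dF B = rF C → mulF (mulF A B) C = mulF A (mulF B C)) ∧
    (∀ A : Set S, IsPFilt A → IsPFilt (invF A) ∧ dF (invF A) = rF A ∧
      rF (invF A) = dF A ∧ mulF (invF A) A = dF A ∧ mulF A (invF A) = rF A) ∧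
    (∀ A : Set S, IsPFilt A → mulF A (dF A) = A ∧ mulF (rF A) A = A) ∧
    (∀ E : Set S, IsPFilt E →
      ((dF E = rF E ∧ mulF E E = E) ↔ ∃ e ∈ E, IsIdem e)) := by
  refine ⟨?_, ?_, ?_, ?_, ?_, ?_⟩
  · exact fun A B hA hB h => ISZ.pfilt_mul hS hA hB h
  · intro A B hA hB h
    constructor
    · calc dF (mulF A B) = mulF (invF (mulF A B)) (mulF A B) := ISZ.dF_eq hS _
        _ = mulF (mulF (invF B) (invF A)) (mulF A B) := by rw [ISZ.invF_mulF hS]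
        _ = mulF (invF B) (mulF (invF A) (mulF A B)) := ISZ.mulF_assoc hS _ _ _
        _ = mulF (invF B) (mulF (mulF (invF A) A) B) := by
            rw [← ISZ.mulF_assoc hS (invF A) A B]
        _ = mulF (invF B) (mulF (dF A) B) := by rw [← ISZ.dF_eq hS]
        _ = mulF (invF B) (mulF (rF B) B) := by rw [h]
        _ = mulF (invF B) B := by rw [ISZ.filt_rF_mul hS hB.1]
        _ = dF B := (ISZ.dF_eq hS B).symm
    · calc rF (mulF A B) = mulF (mulF A B) (invF (mulF A B)) := ISZ.rF_eq hS _
        _ = mulF (mulF A B) (mulF (invF B) (invF A)) := by rw [ISZ.invF_mulF hS]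
        _ = mulF A (mulF B (mulF (invF B) (invF A))) := by rw [ISZ.mulF_assoc hS]
        _ = mulF A (mulF (mulF B (invF B)) (invF A)) := by
            rw [← ISZ.mulF_assoc hS B (invF B) (invF A)]
        _ = mulF A (mulF (rF B) (invF A)) := by rw [← ISZ.rF_eq hS]
        _ = mulF A (mulF (dF A) (invF A)) := by rw [h]
        _ = mulF A (mulF (rF (invF A)) (invF A)) := by rw [ISZ.rF_invF hS]
        _ = mulF A (invF A) := by rw [ISZ.filt_rF_mul hS (ISZ.pfilt_inv hS hA).1]
        _ = rF A := (ISZ.rF_eq hS A).symm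
  · exact fun A B C _ _ _ _ _ => ISZ.mulF_assoc hS A B C
  · intro A hA
    exact ⟨ISZ.pfilt_inv hS hA, ISZ.dF_invF hS A, ISZ.rF_invF hS A,
      (ISZ.dF_eq hS A).symm, (ISZ.rF_eq hS A).symm⟩
  · exact fun A hA => ⟨ISZ.filt_mul_dF hS hA.1, ISZ.filt_rF_mul hS hA.1⟩
  · intro E hE
    constructor
    · rintro ⟨hdr, hEE⟩
      have hd : dF E = E := by
        calc dF E = mulF (invF E) E := ISZ.dF_eq hS E
          _ = mulF (invF E) (mulF E E) := by rw [hEE]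
          _ = mulF (mulF (invF E) E) E := (ISZ.mulF_assoc hS _ _ _).symm
          _ = mulF (dF E) E := by rw [← ISZ.dF_eq hS]
          _ = mulF (rF E) E := by rw [hdr]
          _ = E := ISZ.filt_rF_mul hS hE.1
      obtain ⟨a, ha⟩ := hE.1.1
      refine ⟨a⁻¹ * a, ?_, ISZ.idem_ia hS a⟩
      rw [← hd]
      exact ⟨a⁻¹ * a, ⟨a, ha, a, ha, rfl⟩, ISZ.natLe_refl hS _⟩
    · rintro ⟨e, heE, he⟩
      obtain ⟨h1, h2, h3⟩ := ISZ.idem_filter_eqs hS hE.1 heE he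
      exact ⟨h1.trans h2.symm, h3⟩
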